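/- Under the standing assumptions on φ and φ_λ: (i) for all λ₁ > λ₂ > 0 and all x ∈ H, φ_{λ₁}(x) ≥ φ_{λ₂}(x) ≥ φ(x); and (ii) for every x ∈ H, inf_{λ>0} φ_λ(x) = φ(x); equivalently, for every sequence λ_k → 0⁺ one has φ_{λ_k}(x) → φ(x). (Theorem 3.1(a).) -/

import Mathlib

open Filter Topology MeasureTheory

/-- The Moreau envelope of a function `S : H × E → ℝ` (in two arguments) with parameter
`lam`, for the Hilbert norm of the product. -/
noncomputable def moreauEnv2 {H E : Type*} [NormedAddCommGroup H] [InnerProductSpace ℝ H]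
    [NormedAddCommGroup E] [InnerProductSpace ℝ E]
    (S : H → E → ℝ) (lam : ℝ) (x : H) (z : E) : ℝ :=
  ⨅ u : H × E, (S u.1 u.2 + (‖x - u.1‖ ^ 2 + ‖z - u.2‖ ^ 2) / (2 * lam))


section MoreauAux
variable {H E : Type*} [NormedAddCommGroup H] [InnerProductSpace ℝ H]
  [NormedAddCommGroup E] [InnerProductSpace ℝ E]

lemma moreau_term_lb (S : H → E → ℝ) (ψ : (H × E) →L[ℝ] ℝ) (α : ℝ)
    (hlb : ∀ u : H × E, α + ψ u ≤ S u.1 u.2) {lam : ℝ} (hlam : 0 < lam) (x : H) (z : E)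
    (u : H × E) :
    α - ‖ψ‖ * (‖x‖ + ‖z‖) - 2 * ‖ψ‖ ^ 2 * lam ≤
      S u.1 u.2 + (‖x - u.1‖ ^ 2 + ‖z - u.2‖ ^ 2) / (2 * lam) := by
  have h0 : -(‖ψ‖ * ‖u‖) ≤ ψ u := by
    have := ψ.le_opNorm u
    rw [Real.norm_eq_abs] at this
    have := neg_abs_le (ψ u)
    linarith
  have hu1 : ‖u‖ ≤ ‖u.1‖ + ‖u.2‖ := by
    rw [Prod.norm_def]
    exact max_le (le_add_of_nonneg_right (norm_nonneg _)) (le_add_of_nonneg_left (norm_nonneg _))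
  have hx1 : ‖u.1‖ ≤ ‖x‖ + ‖x - u.1‖ := by
    calc ‖u.1‖ = ‖x - (x - u.1)‖ := by rw [sub_sub_cancel]
    _ ≤ ‖x‖ + ‖x - u.1‖ := norm_sub_le _ _
  have hz1 : ‖u.2‖ ≤ ‖z‖ + ‖z - u.2‖ := by
    calc ‖u.2‖ = ‖z - (z - u.2)‖ := by rw [sub_sub_cancel]
    _ ≤ ‖z‖ + ‖z - u.2‖ := norm_sub_le _ _
  have hBnn : (0:ℝ) ≤ ‖ψ‖ := ψ.opNorm_nonneg
  set a := ‖x - u.1‖ with ha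
  set b := ‖z - u.2‖ with hb
  have hkey : ‖ψ‖ * (a + b) - 2 * ‖ψ‖ ^ 2 * lam ≤ (a ^ 2 + b ^ 2) / (2 * lam) := by
    rw [le_div_iff₀ (by linarith : (0:ℝ) < 2 * lam)]
    nlinarith [sq_nonneg (a - lam * ‖ψ‖), sq_nonneg (b - lam * ‖ψ‖), sq_nonneg (lam * ‖ψ‖)]
  have hS := hlb u
  have hnu : -(‖ψ‖ * (‖x‖ + ‖z‖ + a + b)) ≤ ψ u := by
    have : ‖ψ‖ * ‖u‖ ≤ ‖ψ‖ * (‖x‖ + ‖z‖ + a + b) := by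
      apply mul_le_mul_of_nonneg_left _ hBnn
      linarith
    linarith
  linarith

lemma moreau_bddBelow (S : H → E → ℝ) (ψ : (H × E) →L[ℝ] ℝ) (α : ℝ)
    (hlb : ∀ u : H × E, α + ψ u ≤ S u.1 u.2) {lam : ℝ} (hlam : 0 < lam) (x : H) (z : E) :
    BddBelow (Set.range fun u : H × E =>
      S u.1 u.2 + (‖x - u.1‖ ^ 2 + ‖z - u.2‖ ^ 2) / (2 * lam)) := by
  refine ⟨α - ‖ψ‖ * (‖x‖ + ‖z‖) - 2 * ‖ψ‖ ^ 2 * lam, ?_⟩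
  rintro _ ⟨u, rfl⟩
  exact moreau_term_lb S ψ α hlb hlam x z u

lemma moreauEnv2_le (S : H → E → ℝ) (ψ : (H × E) →L[ℝ] ℝ) (α : ℝ)
    (hlb : ∀ u : H × E, α + ψ u ≤ S u.1 u.2) {lam : ℝ} (hlam : 0 < lam) (x : H) (z : E) :
    moreauEnv2 S lam x z ≤ S x z := by
  have := ciInf_le (moreau_bddBelow S ψ α hlb hlam x z) (x, z)
  simpa [moreauEnv2] using this

lemma moreauEnv2_mono (S : H → E → ℝ) (ψ : (H × E) →L[ℝ] ℝ) (α : ℝ)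
    (hlb : ∀ u : H × E, α + ψ u ≤ S u.1 u.2) {lam₁ lam₂ : ℝ} (hlam₂ : 0 < lam₂)
    (hle : lam₂ ≤ lam₁) (x : H) (z : E) :
    moreauEnv2 S lam₁ x z ≤ moreauEnv2 S lam₂ x z := by
  have hlam₁ : 0 < lam₁ := lt_of_lt_of_le hlam₂ hle
  apply ciInf_mono (moreau_bddBelow S ψ α hlb hlam₁ x z)
  intro u
  apply add_le_add le_rfl
  exact div_le_div_of_nonneg_left (by positivity) (by linarith) (by linarith)

lemma moreauEnv2_isOpen_lt (S : H → E → ℝ) (ψ : (H × E) →L[ℝ] ℝ) (α : ℝ)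
    (hlb : ∀ u : H × E, α + ψ u ≤ S u.1 u.2) {lam : ℝ} (hlam : 0 < lam) (x : H) (c : ℝ) :
    IsOpen {z : E | moreauEnv2 S lam x z < c} := by
  rw [isOpen_iff_mem_nhds]
  intro z hz
  have hNe : Nonempty (H × E) := ⟨(0, 0)⟩
  simp only [Set.mem_setOf_eq, moreauEnv2] at hz
  obtain ⟨u, hu⟩ := exists_lt_of_ciInf_lt hz
  have hcont : Continuous fun z' : E =>
      S u.1 u.2 + (‖x - u.1‖ ^ 2 + ‖z' - u.2‖ ^ 2) / (2 * lam) := by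
    fun_prop
  have hev : ∀ᶠ z' in 𝓝 z,
      S u.1 u.2 + (‖x - u.1‖ ^ 2 + ‖z' - u.2‖ ^ 2) / (2 * lam) < c :=
    (hcont.tendsto z).eventually_lt_const hu
  filter_upwards [hev] with z' hz'
  exact lt_of_le_of_lt (ciInf_le (moreau_bddBelow S ψ α hlb hlam x z') u) hz'

lemma moreauEnv2_measurableSet_le [MeasurableSpace E] [OpensMeasurableSpace E]
    (S : H → E → ℝ) (ψ : (H × E) →L[ℝ] ℝ) (α : ℝ)
    (hlb : ∀ u : H × E, α + ψ u ≤ S u.1 u.2) {lam : ℝ} (hlam : 0 < lam) (x : H) (c : ℝ) :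
    MeasurableSet {z : E | moreauEnv2 S lam x z ≤ c} := by
  have heq : {z : E | moreauEnv2 S lam x z ≤ c}
      = ⋂ n : ℕ, {z : E | moreauEnv2 S lam x z < c + 1 / (n + 1)} := by
    ext z
    simp only [Set.mem_iInter, Set.mem_setOf_eq]
    constructor
    · intro hle n
      have : (0:ℝ) < 1 / (n + 1) := by positivity
      linarith
    · intro hn
      by_contra hlt
      push_neg at hlt
      obtain ⟨n, hn'⟩ := exists_nat_one_div_lt (sub_pos.2 hlt)
      have := hn n
      linarith
  rw [heq]
  exact MeasurableSet.iInter fun n =>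
    (moreauEnv2_isOpen_lt S ψ α hlb hlam x _).measurableSet

lemma moreauEnv2_limit (S : H → E → ℝ) (ψ : (H × E) →L[ℝ] ℝ) (α : ℝ)
    (hlb : ∀ u : H × E, α + ψ u ≤ S u.1 u.2)
    (hlsc : LowerSemicontinuous fun u : H × E => S u.1 u.2) (x : H) (z : E) (c : ℝ)
    (hall : ∀ lam : ℝ, 0 < lam → moreauEnv2 S lam x z ≤ c) : S x z ≤ c := by
  by_contra hc
  push_neg at hc
  have hNe : Nonempty (H × E) := ⟨(0, 0)⟩
  have hex : ∀ k : ℕ, ∃ u : H × E,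
      S u.1 u.2 + (‖x - u.1‖ ^ 2 + ‖z - u.2‖ ^ 2) / (2 * (1 / (k + 1))) < c + 1 / (k + 1) := by
    intro k
    apply exists_lt_of_ciInf_lt
    have h1 : (0:ℝ) < 1 / (k + 1) := by positivity
    exact lt_of_le_of_lt (hall _ h1) (lt_add_of_pos_right _ h1)
  choose u hu using hex
  set B := ‖ψ‖ with hB
  have hBnn : (0:ℝ) ≤ B := ψ.opNorm_nonneg
  set D : ℕ → ℝ := fun k => ‖x - (u k).1‖ ^ 2 + ‖z - (u k).2‖ ^ 2 with hD
  have hD0 : ∀ k, 0 ≤ D k := fun k => by positivity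
  set A : ℝ := c + 1 - α + B * (‖x‖ + ‖z‖) + 2 * B with hA
  -- key estimate : D k * ((k+1)/2 - B) ≤ A
  have hkey : ∀ k : ℕ, D k * (((k:ℝ) + 1) / 2 - B) ≤ A := by
    intro k
    have hk1 : (0:ℝ) < (k:ℝ) + 1 := by positivity
    have huk := hu k
    -- penalty rewrite
    have hpen : (‖x - (u k).1‖ ^ 2 + ‖z - (u k).2‖ ^ 2) / (2 * (1 / ((k:ℝ) + 1)))
        = D k * (((k:ℝ) + 1) / 2) := by
      rw [hD]
      field_simp
    rw [hpen] at huk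
    -- lower bound on S (u k)
    have hSlb : α - B * (‖x‖ + ‖z‖ + ‖x - (u k).1‖ + ‖z - (u k).2‖) ≤ S (u k).1 (u k).2 := by
      have h0 : -(B * ‖u k‖) ≤ ψ (u k) := by
        have := ψ.le_opNorm (u k)
        rw [Real.norm_eq_abs] at this
        have := neg_abs_le (ψ (u k))
        linarith
      have hu1 : ‖u k‖ ≤ ‖(u k).1‖ + ‖(u k).2‖ := by
        rw [Prod.norm_def]
        exact max_le (le_add_of_nonneg_right (norm_nonneg _))
          (le_add_of_nonneg_left (norm_nonneg _))
      have hx1 : ‖(u k).1‖ ≤ ‖x‖ + ‖x - (u k).1‖ := by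
        calc ‖(u k).1‖ = ‖x - (x - (u k).1)‖ := by rw [sub_sub_cancel]
        _ ≤ ‖x‖ + ‖x - (u k).1‖ := norm_sub_le _ _
      have hz1 : ‖(u k).2‖ ≤ ‖z‖ + ‖z - (u k).2‖ := by
        calc ‖(u k).2‖ = ‖z - (z - (u k).2)‖ := by rw [sub_sub_cancel]
        _ ≤ ‖z‖ + ‖z - (u k).2‖ := norm_sub_le _ _
      have hmul : B * ‖u k‖ ≤ B * (‖x‖ + ‖z‖ + ‖x - (u k).1‖ + ‖z - (u k).2‖) := by
        apply mul_le_mul_of_nonneg_left _ hBnn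
        linarith
      have := hlb (u k)
      linarith
    have hab : ‖x - (u k).1‖ + ‖z - (u k).2‖ ≤ 2 + D k := by
      have h1 : ‖x - (u k).1‖ ≤ 1 + ‖x - (u k).1‖ ^ 2 := by nlinarith [sq_nonneg (‖x - (u k).1‖ - 1)]
      have h2 : ‖z - (u k).2‖ ≤ 1 + ‖z - (u k).2‖ ^ 2 := by nlinarith [sq_nonneg (‖z - (u k).2‖ - 1)]
      simp only [hD]
      linarith
    have h1k : (1:ℝ) / ((k:ℝ) + 1) ≤ 1 := by
      rw [div_le_one hk1]; linarith
    have hBab : B * (‖x - (u k).1‖ + ‖z - (u k).2‖) ≤ B * (2 + D k) :=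
      mul_le_mul_of_nonneg_left hab hBnn
    have hexp : D k * (((k:ℝ) + 1) / 2 - B) = D k * (((k:ℝ) + 1) / 2) - B * D k := by ring
    have hinv : (0:ℝ) < 1 / ((k:ℝ) + 1) := by positivity
    rw [hexp, hA]
    clear_value B D A
    linarith
  -- D k tends to 0
  have htt : Tendsto (fun k : ℕ => ((k:ℝ) + 1) / 2 - B) atTop atTop := by
    apply tendsto_atTop_add_const_right
    apply Tendsto.atTop_div_const (by norm_num : (0:ℝ) < 2)
    exact tendsto_atTop_add_const_right _ _ tendsto_natCast_atTop_atTop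
  have hDtend : Tendsto D atTop (𝓝 0) := by
    rw [tendsto_order]
    constructor
    · intro a ha
      exact Eventually.of_forall fun k => lt_of_lt_of_le ha (hD0 k)
    · intro a ha
      filter_upwards [htt.eventually_gt_atTop (max A 0 / a), htt.eventually_gt_atTop 0]
        with k hk1 hk2
      by_contra hcon
      push_neg at hcon
      have h2 : max A 0 < (((k:ℝ) + 1) / 2 - B) * a := (div_lt_iff₀ ha).1 hk1
      have h3 : a * (((k:ℝ) + 1) / 2 - B) ≤ D k * (((k:ℝ) + 1) / 2 - B) :=
        mul_le_mul_of_nonneg_right hcon (le_of_lt hk2)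
      have h4 := hkey k
      have h5 : A ≤ max A 0 := le_max_left _ _
      nlinarith
  -- u k tends to (x, z)
  have hcomp1 : Tendsto (fun k => ‖x - (u k).1‖) atTop (𝓝 0) := by
    have hsq : Tendsto (fun k => Real.sqrt (D k)) atTop (𝓝 0) := by
      have := (Real.continuous_sqrt.tendsto 0).comp hDtend
      simpa [Function.comp_def] using this
    apply squeeze_zero (fun k => norm_nonneg _) (fun k => ?_) hsq
    rw [show ‖x - (u k).1‖ = Real.sqrt (‖x - (u k).1‖ ^ 2) by
      rw [Real.sqrt_sq (norm_nonneg _)]]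
    apply Real.sqrt_le_sqrt
    have : (0:ℝ) ≤ ‖z - (u k).2‖ ^ 2 := by positivity
    simp only [hD]
    linarith
  have hcomp2 : Tendsto (fun k => ‖z - (u k).2‖) atTop (𝓝 0) := by
    have hsq : Tendsto (fun k => Real.sqrt (D k)) atTop (𝓝 0) := by
      have := (Real.continuous_sqrt.tendsto 0).comp hDtend
      simpa [Function.comp_def] using this
    apply squeeze_zero (fun k => norm_nonneg _) (fun k => ?_) hsq
    rw [show ‖z - (u k).2‖ = Real.sqrt (‖z - (u k).2‖ ^ 2) by
      rw [Real.sqrt_sq (norm_nonneg _)]]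
    apply Real.sqrt_le_sqrt
    have : (0:ℝ) ≤ ‖x - (u k).1‖ ^ 2 := by positivity
    simp only [hD]
    linarith
  have hu1t : Tendsto (fun k => (u k).1) atTop (𝓝 x) := by
    rw [tendsto_iff_norm_sub_tendsto_zero]
    simpa [norm_sub_rev] using hcomp1
  have hu2t : Tendsto (fun k => (u k).2) atTop (𝓝 z) := by
    rw [tendsto_iff_norm_sub_tendsto_zero]
    simpa [norm_sub_rev] using hcomp2
  have hut : Tendsto u atTop (𝓝 (x, z)) := by
    rw [Prod.tendsto_iff]
    exact ⟨hu1t, hu2t⟩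
  -- lower semicontinuity gives contradiction
  set y : ℝ := (c + S x z) / 2 with hy
  have hy1 : c < y := by rw [hy]; linarith
  have hy2 : y < S x z := by rw [hy]; linarith
  have hev : ∀ᶠ k in atTop, y < S (u k).1 (u k).2 := hut.eventually (hlsc (x, z) y hy2)
  have hSu : ∀ k : ℕ, S (u k).1 (u k).2 < c + 1 / ((k:ℝ) + 1) := by
    intro k
    have := hu k
    have hpos : (0:ℝ) ≤ (‖x - (u k).1‖ ^ 2 + ‖z - (u k).2‖ ^ 2) / (2 * (1 / ((k:ℝ) + 1))) := by
      positivity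
    linarith
  have hsmall : ∀ᶠ k : ℕ in atTop, (1:ℝ) / ((k:ℝ) + 1) < y - c := by
    have := tendsto_one_div_add_atTop_nhds_zero_nat (𝕜 := ℝ)
    exact this.eventually_lt_const (by linarith)
  rcases (hev.and hsmall).exists with ⟨k, hk1, hk2⟩
  have := hSu k
  linarith

end MoreauAux

/-- Weak (sequential) convergence in a Hilbert space: `⟪x_k, y⟫ → ⟪x₀, y⟫` for every `y`. -/
def WeakSeqTendsto {H : Type*} [NormedAddCommGroup H] [InnerProductSpace ℝ H]
    (x : ℕ → H) (x₀ : H) : Prop :=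
  ∀ y : H, Tendsto (fun k => (inner ℝ (x k) y : ℝ)) atTop (𝓝 (inner ℝ x₀ y))

/-- Theorem 3.1(a): monotonicity of the regularized probability functions `φ_λ` and
pointwise convergence `inf_{λ>0} φ_λ(x) = φ(x)`, equivalently `φ_{λ_k}(x) → φ(x)` for
every sequence `λ_k → 0⁺`. -/
theorem stmt4
    {H Y : Type*} [NormedAddCommGroup H] [InnerProductSpace ℝ H] [CompleteSpace H]
    [SecondCountableTopology H]
    [NormedAddCommGroup Y] [NormedSpace ℝ Y] [CompleteSpace Y] {m : ℕ}
    {Ω : Type*} [MeasurableSpace Ω] (P : Measure Ω) [IsProbabilityMeasure P]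
    (ξ : Ω → EuclideanSpace ℝ (Fin m)) (hξ : Measurable ξ)
    (hlaw : P.map ξ ≪ volume)
    (K : Set Y) (hKne : K.Nonempty) (hKcl : IsClosed K) (hKconv : Convex ℝ K)
    (hKcone : ∀ c : ℝ, 0 ≤ c → ∀ y ∈ K, c • y ∈ K)
    (C : Set (WeakDual ℝ Y)) (hCne : C.Nonempty) (hCconv : Convex ℝ C) (hCcpt : IsCompact C)
    (hCgen : closure {w : WeakDual ℝ Y | ∃ c : ℝ, 0 ≤ c ∧ ∃ v ∈ C, w = c • v}
      = {w : WeakDual ℝ Y | ∀ y ∈ K, 0 ≤ w y})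
    (Φ : H → EuclideanSpace ℝ (Fin m) → Y)
    (hΦ : Continuous fun q : H × EuclideanSpace ℝ (Fin m) => Φ q.1 q.2)
    (h : H → ℝ) (hconv : ConvexOn ℝ Set.univ h) (hC1 : ContDiff ℝ 1 h)
    (hscal : ∀ v ∈ C, ConvexOn ℝ Set.univ
      (fun q : H × EuclideanSpace ℝ (Fin m) => v (Φ q.1 q.2) + h q.1))
    (S : H → EuclideanSpace ℝ (Fin m) → ℝ)
    (hS : ∀ x z, S x z = ⨆ v : C, ((v : WeakDual ℝ Y) (Φ x z) + h x))
    (φ : H → ℝ)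
    (hφ : ∀ x, φ x = (P {ω | S x (ξ ω) ≤ h x}).toReal)
    (φl : ℝ → H → ℝ)
    (hφl : ∀ lam x, φl lam x = (P {ω | moreauEnv2 S lam x (ξ ω) ≤ h x}).toReal)
    :
    (∀ lam₁ lam₂ : ℝ, 0 < lam₂ → lam₂ < lam₁ → ∀ x : H,
      φ x ≤ φl lam₂ x ∧ φl lam₂ x ≤ φl lam₁ x) ∧
    (∀ x : H, (⨅ lam : {l : ℝ // 0 < l}, φl lam x) = φ x) ∧
    (∀ x : H, ∀ lam : ℕ → ℝ, (∀ k, 0 < lam k) → Tendsto lam atTop (𝓝 0) →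
      Tendsto (fun k => φl (lam k) x) atTop (𝓝 (φ x))) := by

  classical
  obtain ⟨v₀, hv₀⟩ := hCne
  have hNeC : Nonempty C := ⟨⟨v₀, hv₀⟩⟩
  -- continuity of scalarizations
  have hgc : ∀ v : WeakDual ℝ Y,
      Continuous fun w : H × EuclideanSpace ℝ (Fin m) => v (Φ w.1 w.2) + h w.1 :=
    fun v => ((map_continuous v).comp hΦ).add (hC1.continuous.comp continuous_fst)
  -- pointwise boundedness above
  have hbddA : ∀ (x : H) (z : EuclideanSpace ℝ (Fin m)),
      BddAbove (Set.range fun v : C => (v : WeakDual ℝ Y) (Φ x z) + h x) := by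
    intro x z
    have hc : Continuous fun v : WeakDual ℝ Y => v (Φ x z) + h x :=
      (WeakDual.eval_continuous _).add continuous_const
    have := (hCcpt.image hc).bddAbove
    rwa [Set.image_eq_range] at this
  have hgle : ∀ v ∈ C, ∀ (x : H) (z : EuclideanSpace ℝ (Fin m)),
      v (Φ x z) + h x ≤ S x z := by
    intro v hv x z
    rw [hS]
    exact le_ciSup (hbddA x z) ⟨v, hv⟩
  -- lower semicontinuity of S
  have hlsc : LowerSemicontinuous fun u : H × EuclideanSpace ℝ (Fin m) => S u.1 u.2 := by
    intro u y hy
    have hy' : y < S u.1 u.2 := hy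
    rw [hS] at hy'
    clear hy
    obtain ⟨⟨v, hv⟩, hvy⟩ := exists_lt_of_lt_ciSup hy'
    have hev : ∀ᶠ u' : H × EuclideanSpace ℝ (Fin m) in 𝓝 u,
        y < v (Φ u'.1 u'.2) + h u'.1 :=
      ((hgc v).tendsto u).eventually_const_lt hvy
    filter_upwards [hev] with u' hu'
    exact lt_of_lt_of_le hu' (hgle v hv u'.1 u'.2)
  -- affine minorant via Hahn-Banach separation of the epigraph
  set g : (H × EuclideanSpace ℝ (Fin m)) → ℝ :=
    fun w => (v₀ : WeakDual ℝ Y) (Φ w.1 w.2) + h w.1 with hgdef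
  have hgconv : ConvexOn ℝ Set.univ g := hscal v₀ hv₀
  have hgcont : Continuous g := hgc v₀
  set t : Set ((H × EuclideanSpace ℝ (Fin m)) × ℝ) := {p | g p.1 ≤ p.2} with htdef
  have htconv : Convex ℝ t := by
    intro p hp q hq a b ha hb hab
    simp only [htdef, Set.mem_setOf_eq] at hp hq ⊢
    have h1 : g (a • p.1 + b • q.1) ≤ a * g p.1 + b * g q.1 :=
      hgconv.2 (Set.mem_univ _) (Set.mem_univ _) ha hb hab
    have h2 : (a • p + b • q).1 = a • p.1 + b • q.1 := rfl
    have h3 : (a • p + b • q).2 = a * p.2 + b * q.2 := rfl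
    rw [h2, h3]
    have h4 : a * g p.1 ≤ a * p.2 := mul_le_mul_of_nonneg_left hp ha
    have h5 : b * g q.1 ≤ b * q.2 := mul_le_mul_of_nonneg_left hq hb
    linarith
  have htcl : IsClosed t := isClosed_le (hgcont.comp continuous_fst) continuous_snd
  have hx₀ : (((0 : H × EuclideanSpace ℝ (Fin m)), g 0 - 1)) ∉ t := by
    simp only [htdef, Set.mem_setOf_eq, not_le]
    linarith
  obtain ⟨f, u₀, hfx, hft⟩ := geometric_hahn_banach_point_closed htconv htcl hx₀
  set r : ℝ := f (0, 1) with hrdef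
  have hr : 0 < r := by
    have h1 : u₀ < f (0, g 0) := hft _ (by simp [htdef])
    have h2 : f (((0 : H × EuclideanSpace ℝ (Fin m)), g 0)) = f (0, g 0 - 1) + r := by
      rw [hrdef, ← map_add]
      congr 1
      rw [Prod.mk_add_mk]
      congr 1 <;> simp
    rw [h2] at h1
    linarith
  have hmin : ∀ w : H × EuclideanSpace ℝ (Fin m), u₀ < f (w, 0) + g w * r := by
    intro w
    have h1 : u₀ < f (w, g w) := hft _ (by simp [htdef])
    have h2 : f ((w, g w)) = f (w, 0) + g w * r := by
      have h3 : ((w, g w) : (H × EuclideanSpace ℝ (Fin m)) × ℝ)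
          = (w, (0:ℝ)) + (g w) • (((0 : H × EuclideanSpace ℝ (Fin m)), (1:ℝ))) := by
        rw [Prod.smul_mk, Prod.mk_add_mk]
        congr 1 <;> simp
      rw [h3, map_add, f.map_smul, smul_eq_mul, hrdef]
    rw [h2] at h1
    exact h1
  set ψ : (H × EuclideanSpace ℝ (Fin m)) →L[ℝ] ℝ :=
    (-(1 / r)) • (f.comp (ContinuousLinearMap.inl ℝ (H × EuclideanSpace ℝ (Fin m)) ℝ)) with hψdef
  set α : ℝ := u₀ / r with hαdef
  have hlb : ∀ w : H × EuclideanSpace ℝ (Fin m), α + ψ w ≤ S w.1 w.2 := by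
    intro w
    have h1 := hmin w
    have hψw : ψ w = -(1 / r) * f (w, 0) := by
      simp [hψdef, ContinuousLinearMap.inl_apply]
    have hg : g w ≤ S w.1 w.2 := hgle v₀ hv₀ w.1 w.2
    have h2 : (u₀ - f (w, 0)) / r < g w := by
      rw [div_lt_iff₀ hr]
      linarith
    have h3 : α + ψ w = (u₀ - f (w, 0)) / r := by
      rw [hαdef, hψw]
      ring
    rw [h3]
    exact le_of_lt (lt_of_lt_of_le h2 hg)
  -- measurability of the superlevel sets
  have hAmeas : ∀ (x : H) (lam : ℝ), 0 < lam →
      MeasurableSet {ω | moreauEnv2 S lam x (ξ ω) ≤ h x} := by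
    intro x lam hlam
    exact hξ (moreauEnv2_measurableSet_le S ψ α hlb hlam x (h x))
  -- set inclusions
  have hsub1 : ∀ (x : H) (lam : ℝ), 0 < lam →
      {ω | S x (ξ ω) ≤ h x} ⊆ {ω | moreauEnv2 S lam x (ξ ω) ≤ h x} := by
    intro x lam hlam ω hω
    exact le_trans (moreauEnv2_le S ψ α hlb hlam x (ξ ω)) hω
  have hsub2 : ∀ (x : H) (lam₁ lam₂ : ℝ), 0 < lam₂ → lam₂ ≤ lam₁ →
      {ω | moreauEnv2 S lam₂ x (ξ ω) ≤ h x} ⊆ {ω | moreauEnv2 S lam₁ x (ξ ω) ≤ h x} := by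
    intro x lam₁ lam₂ h2 h12 ω hω
    exact le_trans (moreauEnv2_mono S ψ α hlb h2 h12 x (ξ ω)) hω
  -- part 1
  have part1 : ∀ lam₁ lam₂ : ℝ, 0 < lam₂ → lam₂ < lam₁ → ∀ x : H,
      φ x ≤ φl lam₂ x ∧ φl lam₂ x ≤ φl lam₁ x := by
    intro lam₁ lam₂ h2 h12 x
    constructor
    · rw [hφ, hφl]
      exact ENNReal.toReal_mono (measure_ne_top P _) (measure_mono (hsub1 x lam₂ h2))
    · rw [hφl, hφl]
      exact ENNReal.toReal_mono (measure_ne_top P _)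
        (measure_mono (hsub2 x lam₁ lam₂ h2 (le_of_lt h12)))
  -- canonical sequence convergence
  have hcanon : ∀ x : H,
      Tendsto (fun n : ℕ => φl (1 / ((n:ℝ) + 1)) x) atTop (𝓝 (φ x)) := by
    intro x
    set s : ℕ → Set Ω := fun n => {ω | moreauEnv2 S (1 / ((n:ℝ) + 1)) x (ξ ω) ≤ h x}
      with hsdef
    have hs : ∀ n, MeasurableSet (s n) := fun n => hAmeas x _ (by positivity)
    have hanti : Antitone s := by
      intro n n' hnn'
      apply hsub2 x _ _ (by positivity)
      apply one_div_le_one_div_of_le (by positivity)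
      have : (n:ℝ) ≤ (n':ℝ) := Nat.cast_le.2 hnn'
      linarith
    have hint : ⋂ n, s n = {ω | S x (ξ ω) ≤ h x} := by
      ext ω
      simp only [hsdef, Set.mem_iInter, Set.mem_setOf_eq]
      constructor
      · intro hω
        apply moreauEnv2_limit S ψ α hlb hlsc x (ξ ω) (h x)
        intro lam hlam
        obtain ⟨n, hn⟩ := exists_nat_one_div_lt hlam
        exact le_trans (moreauEnv2_mono S ψ α hlb (by positivity) (le_of_lt hn) x (ξ ω)) (hω n)
      · intro hω n
        exact le_trans (moreauEnv2_le S ψ α hlb (by positivity) x (ξ ω)) hω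
    have htm := tendsto_measure_iInter_atTop (μ := P)
      (fun n => (hs n).nullMeasurableSet) hanti ⟨0, measure_ne_top P _⟩
    rw [hint] at htm
    have h2 := (ENNReal.tendsto_toReal (measure_ne_top P _)).comp htm
    have heq : (fun n : ℕ => φl (1 / ((n:ℝ) + 1)) x)
        = fun n : ℕ => (P (s n)).toReal := by
      funext n
      rw [hφl]
    rw [heq, hφ]
    exact h2
  -- part 3
  have part3 : ∀ x : H, ∀ lam : ℕ → ℝ, (∀ k, 0 < lam k) → Tendsto lam atTop (𝓝 0) →
      Tendsto (fun k => φl (lam k) x) atTop (𝓝 (φ x)) := by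
    intro x L hLpos hL0
    rw [Metric.tendsto_atTop]
    intro ε hε
    have h1 : ∀ᶠ n : ℕ in atTop, φl (1 / ((n:ℝ) + 1)) x < φ x + ε :=
      (hcanon x).eventually_lt_const (lt_add_of_pos_right _ hε)
    obtain ⟨n₀, hn₀⟩ := h1.exists
    have h2 : ∀ᶠ k : ℕ in atTop, L k < 1 / ((n₀:ℝ) + 1) :=
      hL0.eventually_lt_const (by positivity)
    obtain ⟨N, hN⟩ := h2.exists_forall_of_atTop
    refine ⟨N, fun k hk => ?_⟩
    have hlow : φ x ≤ φl (L k) x := (part1 (L k + 1) (L k) (hLpos k) (lt_add_one _) x).1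
    have hhigh : φl (L k) x ≤ φl (1 / ((n₀:ℝ) + 1)) x :=
      (part1 _ _ (hLpos k) (hN k hk) x).2
    rw [Real.dist_eq, abs_of_nonneg (by linarith)]
    linarith
  refine ⟨part1, ?_, part3⟩
  -- part 2
  intro x
  have hNe : Nonempty {l : ℝ // 0 < l} := ⟨⟨1, one_pos⟩⟩
  have hlow : ∀ lam : {l : ℝ // 0 < l}, φ x ≤ φl lam x :=
    fun lam => (part1 (lam + 1) lam lam.2 (lt_add_one _) x).1
  apply le_antisymm
  · have hb : BddBelow (Set.range fun lam : {l : ℝ // 0 < l} => φl lam x) := by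
      refine ⟨φ x, ?_⟩
      rintro _ ⟨lam, rfl⟩
      exact hlow lam
    refine ge_of_tendsto (hcanon x) (Eventually.of_forall fun n => ?_)
    exact ciInf_le hb ⟨1 / ((n:ℝ) + 1), by positivity⟩
  · exact le_ciInf hlow
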